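/- Let R ⊆ ℂ[[t]] be a subring of finite codimension δ = dim_ℂ(ℂ[[t]]/R), and let I be an ideal of R with dim_ℂ(R/I) = r such that t^r ℂ[[t]] ⊇ I (so t^{-r} I ⊆ ℂ[[t]]). Then dim_ℂ(ℂ[[t]]/t^{-r}I) = δ. -/

import Mathlib

open PowerSeries

set_option synthInstance.maxHeartbeats 1000000
set_option maxHeartbeats 4000000

/-- For `R ⊆ ℂ[[t]]` of finite codimension `δ` and an ideal `I` of `R`
with `dim_ℂ(R/I) = r` and `I ⊆ t^r ℂ[[t]]`, the subspace `t^{-r} I ⊆ ℂ[[t]]` has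
codimension `δ`: `dim_ℂ(ℂ[[t]] / t^{-r} I) = δ`. -/
theorem codim_of_shifted_ideal
    (R : Subalgebra ℂ (PowerSeries ℂ))
    (δ : ℕ)
    (hfin : FiniteDimensional ℂ (PowerSeries ℂ ⧸ Subalgebra.toSubmodule R))
    (hδ : Module.finrank ℂ (PowerSeries ℂ ⧸ Subalgebra.toSubmodule R) = δ)
    (I : Ideal R) (r : ℕ)
    (hrfin : FiniteDimensional ℂ (R ⧸ I))
    (hr : Module.finrank ℂ (R ⧸ I) = r)
    (hsub : ∀ f : R, f ∈ I → (X : PowerSeries ℂ) ^ r ∣ (f : PowerSeries ℂ)) :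
    Module.finrank ℂ
      (PowerSeries ℂ ⧸ Submodule.span ℂ
        {g : PowerSeries ℂ | ∃ f : R, f ∈ I ∧ (f : PowerSeries ℂ) = X ^ r * g}) = δ := by
  classical
  set J : Submodule ℂ (PowerSeries ℂ) := Submodule.span ℂ
      {g : PowerSeries ℂ | ∃ f : R, f ∈ I ∧ (f : PowerSeries ℂ) = X ^ r * g} with hJdef
  let ι : ↥R →ₗ[ℂ] PowerSeries ℂ := R.val.toLinearMap
  let p : Submodule ℂ (PowerSeries ℂ) := (I.restrictScalars ℂ).map ι
  let q : Submodule ℂ (PowerSeries ℂ) := Subalgebra.toSubmodule R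
  have hmem_p : ∀ x : PowerSeries ℂ, x ∈ p ↔ ∃ f : R, f ∈ I ∧ (f : PowerSeries ℂ) = x := by
    intro x
    simp only [p, Submodule.mem_map, Submodule.restrictScalars_mem]
    rfl
  have hpq : p ≤ q := by
    intro x hx
    obtain ⟨f, _, hfx⟩ := (hmem_p x).mp hx
    simp only [← hfx]; exact f.2
  -- multiplication by X^r
  let μ : PowerSeries ℂ →ₗ[ℂ] PowerSeries ℂ := LinearMap.mulLeft ℂ ((X : PowerSeries ℂ) ^ r)
  have hμ : ∀ g, μ g = X ^ r * g := fun g => rfl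
  have hpμ : p ≤ LinearMap.range μ := by
    intro x hx
    obtain ⟨f, hfI, hfx⟩ := (hmem_p x).mp hx
    obtain ⟨g, hg⟩ := hsub f hfI
    exact ⟨g, by rw [hμ, ← hg, hfx]⟩
  -- comap μ p = J
  have hJcomap : Submodule.comap μ p = J := by
    apply le_antisymm
    · intro g hg
      obtain ⟨f, hfI, hfx⟩ := (hmem_p (μ g)).mp hg
      exact Submodule.subset_span ⟨f, hfI, by rw [hfx, hμ]⟩
    · rw [hJdef]
      apply Submodule.span_le.mpr
      rintro g ⟨f, hfI, hfg⟩
      exact (hmem_p (μ g)).mpr ⟨f, hfI, by rw [hfg, hμ]⟩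
  have hJle : J ≤ Submodule.comap μ p := le_of_eq hJcomap.symm
  -- induced map on quotients
  let ψ : (PowerSeries ℂ ⧸ J) →ₗ[ℂ] (PowerSeries ℂ ⧸ p) := Submodule.mapQ J p μ hJle
  have hψ_inj : Function.Injective ψ := by
    rw [← LinearMap.ker_eq_bot, LinearMap.ker_eq_bot']
    intro x hx
    obtain ⟨g, rfl⟩ := Submodule.Quotient.mk_surjective J x
    rw [Submodule.mapQ_apply, Submodule.Quotient.mk_eq_zero] at hx
    rw [Submodule.Quotient.mk_eq_zero, ← hJcomap]
    exact hx
  let W : Submodule ℂ (PowerSeries ℂ ⧸ p) := (LinearMap.range μ).map p.mkQ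
  have hψ_range : LinearMap.range ψ = W := by
    apply le_antisymm
    · rintro x ⟨y, rfl⟩
      obtain ⟨g, rfl⟩ := Submodule.Quotient.mk_surjective J y
      rw [Submodule.mapQ_apply]
      exact ⟨μ g, ⟨g, rfl⟩, rfl⟩
    · rintro x ⟨m, ⟨g, rfl⟩, rfl⟩
      exact ⟨Submodule.Quotient.mk g, by rw [Submodule.mapQ_apply]; rfl⟩
  -- N : image of R in the quotient by p
  let N : Submodule ℂ (PowerSeries ℂ ⧸ p) := q.map p.mkQ
  let θ : ↥R →ₗ[ℂ] (PowerSeries ℂ ⧸ p) := p.mkQ ∘ₗ ι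
  have hθrange : LinearMap.range θ = N := by
    rw [LinearMap.range_comp]
    congr 1
    ext x
    simp only [LinearMap.mem_range]
    constructor
    · rintro ⟨y, rfl⟩; exact y.2
    · intro hx; exact ⟨⟨x, hx⟩, rfl⟩
  have hθker : LinearMap.ker θ = I.restrictScalars ℂ := by
    ext f
    simp only [LinearMap.mem_ker, θ, LinearMap.comp_apply, Submodule.mkQ_apply,
      Submodule.Quotient.mk_eq_zero, Submodule.restrictScalars_mem]
    rw [hmem_p]
    constructor
    · rintro ⟨f', hf', hff⟩
      have : f' = f := Subtype.ext hff
      rwa [this] at hf'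
    · intro hf; exact ⟨f, hf, rfl⟩
  -- equivalences
  have eRI : (↥R ⧸ I.restrictScalars ℂ) ≃ₗ[ℂ] (R ⧸ I) :=
    Submodule.Quotient.restrictScalarsEquiv ℂ I
  have eN : (R ⧸ I) ≃ₗ[ℂ] N :=
    eRI.symm.trans ((Submodule.quotEquivOfEq _ _ hθker.symm).trans
      (θ.quotKerEquivRange.trans (LinearEquiv.ofEq _ _ hθrange)))
  have eQ : ((PowerSeries ℂ ⧸ p) ⧸ N) ≃ₗ[ℂ] (PowerSeries ℂ ⧸ q) :=
    Submodule.quotientQuotientEquivQuotient p q hpq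
  have eW : ((PowerSeries ℂ ⧸ p) ⧸ W) ≃ₗ[ℂ] (PowerSeries ℂ ⧸ LinearMap.range μ) :=
    Submodule.quotientQuotientEquivQuotient p (LinearMap.range μ) hpμ
  -- finrank of PowerSeries ℂ ⧸ range μ is r
  let φ : PowerSeries ℂ →ₗ[ℂ] (Fin r → ℂ) := LinearMap.pi (fun i : Fin r => PowerSeries.coeff (R := ℂ) (i : ℕ))
  have hφsurj : Function.Surjective φ := by
    intro v
    refine ⟨PowerSeries.mk (fun n => if h : n < r then v ⟨n, h⟩ else 0), ?_⟩
    ext i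
    simp [φ, PowerSeries.coeff_mk, i.2]
  have hφker : LinearMap.ker φ = LinearMap.range μ := by
    ext f
    simp only [LinearMap.mem_ker, LinearMap.mem_range]
    constructor
    · intro h
      have : (X : PowerSeries ℂ) ^ r ∣ f := by
        rw [PowerSeries.X_pow_dvd_iff]
        intro m hm
        have := congrFun h ⟨m, hm⟩
        simpa [φ] using this
      obtain ⟨g, hg⟩ := this
      exact ⟨g, by rw [hμ, ← hg]⟩
    · rintro ⟨g, rfl⟩
      ext i
      rw [hμ]
      simp [φ, PowerSeries.coeff_X_pow_mul', Nat.not_le.mpr i.2]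
  have eT : (PowerSeries ℂ ⧸ LinearMap.range μ) ≃ₗ[ℂ] (Fin r → ℂ) :=
    (Submodule.quotEquivOfEq _ _ hφker.symm).trans (φ.quotKerEquivOfSurjective hφsurj)
  have hrankT : Module.finrank ℂ (PowerSeries ℂ ⧸ LinearMap.range μ) = r := by
    rw [eT.finrank_eq, Module.finrank_pi, Fintype.card_fin]
  -- finite dimensionality facts
  haveI hfinN : FiniteDimensional ℂ N := Module.Finite.equiv eN
  haveI hfinQN : FiniteDimensional ℂ ((PowerSeries ℂ ⧸ p) ⧸ N) := Module.Finite.equiv eQ.symm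
  haveI hfinV : FiniteDimensional ℂ (PowerSeries ℂ ⧸ p) := by
    rw [FiniteDimensional, Module.finite_def]
    apply Submodule.fg_of_fg_map_of_fg_inf_ker N.mkQ
    · rw [Submodule.map_top, LinearMap.range_eq_top.mpr N.mkQ_surjective]
      exact Module.finite_def.mp hfinQN
    · rw [top_inf_eq, Submodule.ker_mkQ]
      exact (Submodule.fg_iff_finiteDimensional N).mpr hfinN
  -- rank bookkeeping
  have h1 := Submodule.finrank_quotient_add_finrank N
  have h2 := Submodule.finrank_quotient_add_finrank W
  rw [eQ.finrank_eq, hδ, eN.symm.finrank_eq, hr] at h1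
  rw [eW.finrank_eq, hrankT] at h2
  have hfinal : Module.finrank ℂ (PowerSeries ℂ ⧸ J) = Module.finrank ℂ W :=
    ((LinearEquiv.ofInjective ψ hψ_inj).trans (LinearEquiv.ofEq _ _ hψ_range)).finrank_eq
  rw [hfinal]
  omega
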